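/- Let g: {0,1}^n → {0,1}^m satisfy |Σ_a (δ^k_{g(a)} − 2^{−m})(−1)^{a·r}| ≤ n²(√2)^{n−m} for all k, r. Define ρ_{KE} = Σ_k Σ_a |k⟩⟨k| δ^k_{g(a)} tr_A[ρ_{AE} ∏_i A_i(a_i)] with binary projective measurements A_i(a) = (1/2)(1 + (−1)^a C_i). Then ‖ρ_{KE} − u_K ⊗ ρ_E‖₁ ≤ n²(√2)^{m−n} Σ_{r∈{0,1}^n} ‖tr_A(ρ_{AE} ∏_i C_i^{r_i})‖₁, where C_i⁰ = 1 and C_i¹ = C_i. -/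

import Mathlib

open Matrix ComplexOrder

/-- The trace norm `‖X‖₁ = tr √(Xᴴ X)` of a matrix. -/
noncomputable def traceNorm {n : Type*} [Fintype n] [DecidableEq n] (X : Matrix n n ℂ) : ℝ :=
  (((Matrix.posSemidef_conjTranspose_mul_self X).1.eigenvectorUnitary : Matrix n n ℂ) *
    diagonal (((↑) : ℝ → ℂ) ∘ Real.sqrt ∘ (Matrix.posSemidef_conjTranspose_mul_self X).1.eigenvalues) *
    (star (Matrix.posSemidef_conjTranspose_mul_self X).1.eigenvectorUnitary : Matrix n n ℂ)).trace.re

/-- Partial trace over the first tensor factor. -/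
noncomputable def ptraceLeft {α β : Type*} [Fintype α]
    (M : Matrix (α × β) (α × β) ℂ) : Matrix β β ℂ :=
  Matrix.of fun b b' => ∑ a, M (a, b) (a, b')

set_option linter.unusedSectionVars false
set_option linter.unnecessarySimpa false
set_option linter.unnecessarySeqFocus false
set_option maxHeartbeats 1000000

set_option linter.unusedSectionVars false
namespace TNaux
variable {N : Type*} [Fintype N] [DecidableEq N]

lemma star_mul_unit (M : Matrix N N ℂ) (hM : M.IsHermitian) :
    (hM.eigenvectorUnitary : Matrix N N ℂ)ᴴ * (hM.eigenvectorUnitary : Matrix N N ℂ) = 1 := by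
  rw [← Matrix.star_eq_conjTranspose]
  have := congrArg Subtype.val (Unitary.star_mul_self hM.eigenvectorUnitary)
  simpa using this

lemma mul_star_unit (M : Matrix N N ℂ) (hM : M.IsHermitian) :
    (hM.eigenvectorUnitary : Matrix N N ℂ) * (hM.eigenvectorUnitary : Matrix N N ℂ)ᴴ = 1 := by
  rw [← Matrix.star_eq_conjTranspose]
  have := congrArg Subtype.val (Unitary.mul_star_self hM.eigenvectorUnitary)
  simpa using this

lemma trace_sqrt (H : Matrix N N ℂ) (hH : H.IsHermitian) :
    ((hH.eigenvectorUnitary : Matrix N N ℂ) *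
      diagonal (((↑) : ℝ → ℂ) ∘ Real.sqrt ∘ hH.eigenvalues) *
      (star hH.eigenvectorUnitary : Matrix N N ℂ)).trace.re = ∑ i, Real.sqrt (hH.eigenvalues i) := by
  rw [Matrix.trace_mul_cycle]
  rw [show (star hH.eigenvectorUnitary : Matrix N N ℂ) * hH.eigenvectorUnitary.1 = 1 from
    star_mul_unit H hH, one_mul, Matrix.trace_diagonal]
  simp [Complex.ofReal_re]

lemma traceNorm_eq (X : Matrix N N ℂ) :
    traceNorm X = ∑ i, Real.sqrt ((Matrix.posSemidef_conjTranspose_mul_self X).1.eigenvalues i) :=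
  trace_sqrt _ _

lemma traceNorm_nonneg (X : Matrix N N ℂ) : 0 ≤ traceNorm X := by
  rw [traceNorm_eq]
  exact Finset.sum_nonneg fun i _ => Real.sqrt_nonneg _

lemma inner_equiv_symm (x y : N → ℂ) :
    inner ℂ ((WithLp.equiv 2 (N → ℂ)).symm x) ((WithLp.equiv 2 (N → ℂ)).symm y)
      = dotProduct (star x) y := by
  rw [dotProduct_comm]; rfl

lemma conj_diag (M : Matrix N N ℂ) (hM : M.IsHermitian) :
    star (hM.eigenvectorUnitary : Matrix N N ℂ) * M * (hM.eigenvectorUnitary : Matrix N N ℂ)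
      = Matrix.diagonal (Complex.ofReal ∘ hM.eigenvalues) := by
  set U : Matrix N N ℂ := (hM.eigenvectorUnitary : Matrix N N ℂ) with hU
  set D : Matrix N N ℂ := Matrix.diagonal (Complex.ofReal ∘ hM.eigenvalues) with hD
  have h : M = U * D * star U := hM.spectral_theorem
  have hu1 : star U * U = 1 := by rw [Matrix.star_eq_conjTranspose]; exact star_mul_unit M hM
  calc star U * M * U = star U * (U * D * star U) * U := by rw [← h]
    _ = (star U * U) * D * (star U * U) := by simp only [Matrix.mul_assoc]
    _ = D := by rw [hu1, Matrix.one_mul, Matrix.mul_one]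

noncomputable def nsq (x : N → ℂ) : ℝ := (dotProduct (star x) x).re

lemma nsq_eq_norm (x : N → ℂ) :
    nsq x = ‖(WithLp.equiv 2 (N → ℂ)).symm x‖ ^ 2 := by
  have h := inner_equiv_symm x x
  have h2 := inner_self_eq_norm_sq (𝕜 := ℂ) ((WithLp.equiv 2 (N → ℂ)).symm x)
  rw [nsq, ← h, ← h2, RCLike.re_to_complex]

lemma nsq_nonneg (x : N → ℂ) : 0 ≤ nsq x := by
  rw [nsq_eq_norm]; positivity

lemma re_dot_le (x y : N → ℂ) :
    (dotProduct (star x) y).re ≤ Real.sqrt (nsq x) * Real.sqrt (nsq y) := by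
  have h := inner_equiv_symm x y
  have hcs := norm_inner_le_norm (𝕜 := ℂ) ((WithLp.equiv 2 (N → ℂ)).symm x)
    ((WithLp.equiv 2 (N → ℂ)).symm y)
  calc (dotProduct (star x) y).re ≤ ‖(dotProduct (star x) y)‖ :=
        Complex.re_le_norm _
    _ = ‖inner (𝕜 := ℂ) ((WithLp.equiv 2 (N → ℂ)).symm x) ((WithLp.equiv 2 (N → ℂ)).symm y)‖ := by
        rw [h]
    _ ≤ ‖(WithLp.equiv 2 (N → ℂ)).symm x‖ * ‖(WithLp.equiv 2 (N → ℂ)).symm y‖ := hcs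
    _ = Real.sqrt (nsq x) * Real.sqrt (nsq y) := by
        rw [nsq_eq_norm, nsq_eq_norm, Real.sqrt_sq (norm_nonneg _), Real.sqrt_sq (norm_nonneg _)]

lemma nsq_mulVec (A : Matrix N N ℂ) (x : N → ℂ) :
    nsq (A *ᵥ x) = (dotProduct (star x) ((Aᴴ * A) *ᵥ x)).re := by
  rw [nsq, Matrix.star_mulVec, ← Matrix.mulVec_mulVec]
  rw [← dotProduct_mulVec]

noncomputable def colv (V : Matrix N N ℂ) (i : N) : N → ℂ := fun a => V a i

lemma diag_conj (V M : Matrix N N ℂ) (i : N) :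
    (Vᴴ * M * V) i i = dotProduct (star (colv V i)) (M *ᵥ colv V i) := by
  simp only [Matrix.mul_apply, Matrix.mulVec, dotProduct, colv,
    Matrix.conjTranspose_apply, Pi.star_apply, Finset.sum_mul, Finset.mul_sum]
  rw [Finset.sum_comm]
  refine Finset.sum_congr rfl fun a _ => Finset.sum_congr rfl fun b _ => by ring

lemma trace_conj (V M : Matrix N N ℂ) (hV : V * Vᴴ = 1) :
    (Vᴴ * M * V).trace = M.trace := by
  rw [Matrix.trace_mul_cycle Vᴴ M V, hV, one_mul]

lemma re_trace_mul_le (U M : Matrix N N ℂ) (hU : ∀ y, nsq (U *ᵥ y) ≤ nsq y) :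
    (Matrix.trace (U * M)).re ≤ traceNorm M := by
  have hH := Matrix.posSemidef_conjTranspose_mul_self M
  set V : Matrix N N ℂ := (hH.1.eigenvectorUnitary : Matrix N N ℂ) with hVdef
  have h1 : Vᴴ * V = 1 := star_mul_unit _ hH.1
  have h2 : V * Vᴴ = 1 := mul_star_unit _ hH.1
  have hdiag : Vᴴ * (Mᴴ * M) * V = Matrix.diagonal (Complex.ofReal ∘ hH.1.eigenvalues) := by
    have := conj_diag _ hH.1
    rwa [Matrix.star_eq_conjTranspose] at this
  have htr : (U * M).trace = ∑ i, dotProduct (star (colv V i)) ((U * M) *ᵥ colv V i) := by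
    rw [← trace_conj V (U * M) h2, Matrix.trace]
    exact Finset.sum_congr rfl fun i _ => diag_conj V (U * M) i
  rw [traceNorm_eq, htr, Complex.re_sum]
  apply Finset.sum_le_sum
  intro i _
  have hnv : nsq (colv V i) = 1 := by
    have key : dotProduct (star (colv V i)) (colv V i) = (Vᴴ * V) i i := by
      simp [Matrix.mul_apply, dotProduct, colv, Matrix.conjTranspose_apply]
    rw [nsq, key, h1]
    simp [Matrix.one_apply]
  have hmv : nsq (M *ᵥ colv V i) = hH.1.eigenvalues i := by
    rw [nsq_mulVec]
    rw [← diag_conj V (Mᴴ * M) i, hdiag]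
    simp [Matrix.diagonal_apply]
  calc (dotProduct (star (colv V i)) ((U * M) *ᵥ colv V i)).re
      = (dotProduct (star (colv V i)) (U *ᵥ (M *ᵥ colv V i))).re := by
        rw [Matrix.mulVec_mulVec]
    _ ≤ Real.sqrt (nsq (colv V i)) * Real.sqrt (nsq (U *ᵥ (M *ᵥ colv V i))) := re_dot_le _ _
    _ ≤ 1 * Real.sqrt (nsq (M *ᵥ colv V i)) := by
        rw [hnv, Real.sqrt_one]
        exact mul_le_mul_of_nonneg_left (Real.sqrt_le_sqrt (hU _)) zero_le_one
    _ = Real.sqrt (hH.1.eigenvalues i) := by rw [one_mul, hmv]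

lemma exists_contraction (Z : Matrix N N ℂ) :
    ∃ U : Matrix N N ℂ, (∀ y, nsq (U *ᵥ y) ≤ nsq y) ∧
      (Matrix.trace (U * Z)).re = traceNorm Z := by
  have hH := Matrix.posSemidef_conjTranspose_mul_self Z
  set lam := hH.1.eigenvalues with hlam
  have hlam0 : ∀ i, 0 ≤ lam i := fun i => hH.eigenvalues_nonneg i
  set V : Matrix N N ℂ := (hH.1.eigenvectorUnitary : Matrix N N ℂ) with hVdef
  have h1 : Vᴴ * V = 1 := star_mul_unit _ hH.1
  have hdiag : Vᴴ * (Zᴴ * Z) * V = Matrix.diagonal (Complex.ofReal ∘ lam) := by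
    have := conj_diag _ hH.1
    rwa [Matrix.star_eq_conjTranspose] at this
  set D : Matrix N N ℂ := Matrix.diagonal (fun i => (((Real.sqrt (lam i))⁻¹ : ℝ) : ℂ)) with hDdef
  have hDstar : Dᴴ = D := by
    rw [hDdef, Matrix.diagonal_conjTranspose]
    refine congrArg Matrix.diagonal ?_
    funext i
    simp [Complex.conj_ofReal]
  set W : Matrix N N ℂ := Z * V * D with hWdef
  set P : Matrix N N ℂ := Matrix.diagonal (fun i => if lam i = 0 then (0 : ℂ) else 1) with hPdef
  have hWW : Wᴴ * W = P := by
    have e1 : Wᴴ * W = Dᴴ * (Vᴴ * (Zᴴ * Z) * V) * D := by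
      rw [hWdef]
      simp only [Matrix.conjTranspose_mul]
      noncomm_ring
    rw [e1, hdiag, hDstar, hDdef, hPdef, Matrix.diagonal_mul_diagonal,
      Matrix.diagonal_mul_diagonal]
    refine congrArg Matrix.diagonal ?_
    funext i
    rcases eq_or_lt_of_le (hlam0 i) with h | h
    · simp [Function.comp_apply, ← h]
    · have hs : Real.sqrt (lam i) ≠ 0 := by positivity
      have hr : (Real.sqrt (lam i))⁻¹ * lam i * (Real.sqrt (lam i))⁻¹ = 1 := by
        rw [mul_comm ((Real.sqrt (lam i))⁻¹) (lam i), mul_assoc, ← mul_inv]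
        rw [Real.mul_self_sqrt (hlam0 i)]
        field_simp
      simp only [Function.comp_apply, if_neg h.ne']
      exact_mod_cast congrArg Complex.ofReal hr
  have hDP : D * P = D := by
    rw [hDdef, hPdef, Matrix.diagonal_mul_diagonal]
    refine congrArg Matrix.diagonal ?_
    funext i
    rcases eq_or_ne (lam i) 0 with h | h
    · simp [h]
    · simp [h]
  have hWP : W * P = W := by
    rw [hWdef, Matrix.mul_assoc, hDP]
  set Q : Matrix N N ℂ := W * Wᴴ with hQdef
  have hQherm : Qᴴ = Q := by rw [hQdef, Matrix.conjTranspose_mul, Matrix.conjTranspose_conjTranspose]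
  have hQ2 : Q * Q = Q := by
    rw [hQdef]
    calc W * Wᴴ * (W * Wᴴ) = W * (Wᴴ * W) * Wᴴ := by noncomm_ring
    _ = W * Wᴴ := by rw [hWW, hWP]
  refine ⟨V * Wᴴ, ?_, ?_⟩
  · intro y
    have hUU : (V * Wᴴ)ᴴ * (V * Wᴴ) = Q := by
      calc (V * Wᴴ)ᴴ * (V * Wᴴ) = W * (Vᴴ * V) * Wᴴ := by
            simp only [Matrix.conjTranspose_mul, Matrix.conjTranspose_conjTranspose]
            noncomm_ring
      _ = Q := by rw [h1, Matrix.mul_one, hQdef]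
    rw [nsq_mulVec, hUU]
    have e2 : (1 - Q)ᴴ * (1 - Q) = 1 - Q := by
      rw [Matrix.conjTranspose_sub, Matrix.conjTranspose_one, hQherm]
      rw [Matrix.sub_mul, Matrix.mul_sub, Matrix.mul_sub, hQ2]
      simp only [Matrix.one_mul, Matrix.mul_one]
      abel
    have h4 : 0 ≤ (dotProduct (star y) ((1 - Q) *ᵥ y)).re := by
      have := nsq_nonneg ((1 - Q) *ᵥ y)
      rwa [nsq_mulVec, e2] at this
    have expand : (dotProduct (star y) ((1 - Q) *ᵥ y)).re
        = nsq y - (dotProduct (star y) (Q *ᵥ y)).re := by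
      rw [Matrix.sub_mulVec, dotProduct_sub, Matrix.one_mulVec, Complex.sub_re, nsq]
    linarith
  · have hc : (V * Wᴴ) * Z = V * (Wᴴ * Z) := by noncomm_ring
    have e3 : Wᴴ * Z * V = Dᴴ * (Vᴴ * (Zᴴ * Z) * V) := by
      rw [hWdef]
      simp only [Matrix.conjTranspose_mul]
      noncomm_ring
    rw [hc, Matrix.trace_mul_comm V (Wᴴ * Z), e3, hdiag, hDstar, hDdef,
      Matrix.diagonal_mul_diagonal, Matrix.trace_diagonal, traceNorm_eq, Complex.re_sum]
    refine Finset.sum_congr rfl fun i _ => ?_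
    simp only [Function.comp_apply]
    rw [← Complex.ofReal_mul, Complex.ofReal_re, ← div_eq_inv_mul, Real.div_sqrt]

lemma nsq_neg (x : N → ℂ) : nsq (-x) = nsq x := by
  simp [nsq]

lemma abs_re_trace_le (U M : Matrix N N ℂ) (hU : ∀ y, nsq (U *ᵥ y) ≤ nsq y) :
    |(Matrix.trace (U * M)).re| ≤ traceNorm M := by
  rw [abs_le]
  constructor
  · have h := re_trace_mul_le (-U) M (fun y => by rw [Matrix.neg_mulVec, nsq_neg]; exact hU y)
    rw [Matrix.neg_mul, Matrix.trace_neg, Complex.neg_re] at h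
    linarith
  · exact re_trace_mul_le U M hU

lemma traceNorm_sum_smul_le {ι : Type*} (s : Finset ι) (c : ι → ℝ) (M : ι → Matrix N N ℂ) :
    traceNorm (∑ j ∈ s, (c j : ℂ) • M j) ≤ ∑ j ∈ s, |c j| * traceNorm (M j) := by
  obtain ⟨U, hU, hEq⟩ := exists_contraction (∑ j ∈ s, (c j : ℂ) • M j)
  rw [← hEq, Matrix.mul_sum, Matrix.trace_sum, Complex.re_sum]
  apply Finset.sum_le_sum
  intro j _
  rw [Matrix.mul_smul, Matrix.trace_smul, smul_eq_mul, Complex.re_ofReal_mul]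
  calc c j * (Matrix.trace (U * M j)).re ≤ |c j * (Matrix.trace (U * M j)).re| := le_abs_self _
    _ = |c j| * |(Matrix.trace (U * M j)).re| := abs_mul _ _
    _ ≤ |c j| * traceNorm (M j) :=
        mul_le_mul_of_nonneg_left (abs_re_trace_le U (M j) hU) (abs_nonneg _)

section Block
variable {K : Type*} [Fintype K] [DecidableEq K]

/-- embedding of a matrix as the `k`-th diagonal block -/
def emb (k : K) (M : Matrix N N ℂ) : Matrix (K × N) (K × N) ℂ :=
  Matrix.of fun p q => (if p.1 = k ∧ q.1 = k then (1 : ℂ) else 0) * M p.2 q.2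

lemma emb_conjTranspose (k : K) (M : Matrix N N ℂ) : (emb k M)ᴴ = emb k Mᴴ := by
  ext p q
  simp only [emb, Matrix.conjTranspose_apply, Matrix.of_apply]
  rcases eq_or_ne p.1 k with hp | hp <;> rcases eq_or_ne q.1 k with hq | hq <;>
    simp [hp, hq]

lemma emb_mul (k : K) (M₁ M₂ : Matrix N N ℂ) : emb k M₁ * emb k M₂ = emb k (M₁ * M₂) := by
  ext p q
  simp only [emb, Matrix.mul_apply, Matrix.of_apply]
  rw [Fintype.sum_prod_type]
  rcases eq_or_ne p.1 k with hp | hp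
  · rcases eq_or_ne q.1 k with hq | hq
    · simp [hp, hq, Finset.mul_sum, Finset.sum_ite_eq']
    · simp [hq]
  · simp [hp]

lemma emb_trace (k : K) (M : Matrix N N ℂ) : (emb k M).trace = M.trace := by
  rw [Matrix.trace, Matrix.trace, Fintype.sum_prod_type]
  simp [emb, Matrix.diag, Finset.sum_ite_eq']

lemma emb_posSemidef (k : K) {M : Matrix N N ℂ} (hM : M.PosSemidef) :
    (emb k M).PosSemidef := by
  refine Matrix.PosSemidef.of_dotProduct_mulVec_nonneg ?_ ?_
  · rw [Matrix.IsHermitian, emb_conjTranspose, hM.1.eq]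
  · intro x
    have : dotProduct (star x) (emb k M *ᵥ x)
        = dotProduct (star fun f => x (k, f)) (M *ᵥ fun f => x (k, f)) := by
      rw [dotProduct, dotProduct, Fintype.sum_prod_type]
      simp only [Matrix.mulVec, dotProduct, emb, Matrix.of_apply, Pi.star_apply]
      have inner : ∀ (x1 : K) (x2 : N),
          (∑ x3 : K × N, (if x1 = k ∧ x3.1 = k then (1:ℂ) else 0) * M x2 x3.2 * x x3)
            = if x1 = k then ∑ f, M x2 f * x (k, f) else 0 := by
        intro x1 x2
        rw [Fintype.sum_prod_type]
        rcases eq_or_ne x1 k with h | h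
        · simp [h, Finset.sum_ite_eq']
        · simp [h]
      simp only [inner]
      simp [Finset.sum_ite_eq', mul_ite, mul_zero]
    rw [this]
    exact hM.dotProduct_mulVec_nonneg _

lemma nsq_eq_sum {M : Type*} [Fintype M] (x : M → ℂ) : nsq x = ∑ i, Complex.normSq (x i) := by
  rw [nsq, dotProduct, Complex.re_sum]
  refine Finset.sum_congr rfl fun i _ => ?_
  simp only [Pi.star_apply, Complex.star_def, Complex.mul_re, Complex.conj_re, Complex.conj_im,
    Complex.normSq_apply]
  ring

lemma nsq_slice_le (k : K) (Y : K × N → ℂ) : nsq (fun j => Y (k, j)) ≤ nsq Y := by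
  rw [nsq_eq_sum, nsq_eq_sum, Fintype.sum_prod_type]
  exact Finset.single_le_sum (f := fun k' => ∑ j, Complex.normSq (Y (k', j)))
    (fun k' _ => Finset.sum_nonneg fun j _ => Complex.normSq_nonneg _) (Finset.mem_univ k)

lemma nsq_lift (k : K) (y : N → ℂ) :
    nsq (fun p : K × N => if p.1 = k then y p.2 else 0) = nsq y := by
  rw [nsq_eq_sum, nsq_eq_sum, Fintype.sum_prod_type]
  simp [apply_ite Complex.normSq, Finset.sum_ite_eq']

lemma traceNorm_emb (k : K) (σ : Matrix N N ℂ) : traceNorm (emb k σ) = traceNorm σ := by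
  apply le_antisymm
  · obtain ⟨U, hU, hEq⟩ := exists_contraction (emb k σ)
    set U' : Matrix N N ℂ := Matrix.of fun i j => U (k, i) (k, j) with hU'
    have htr : (U * emb k σ).trace = (U' * σ).trace := by
      simp only [Matrix.trace, Matrix.diag, Matrix.mul_apply, emb, Matrix.of_apply, hU',
        Fintype.sum_prod_type]
      simp [ite_and, mul_ite, ite_mul, Finset.sum_ite_eq', Finset.sum_ite_eq]
    have hU'c : ∀ y, nsq (U' *ᵥ y) ≤ nsq y := by
      intro y
      set Y : K × N → ℂ := fun p => if p.1 = k then y p.2 else 0 with hY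
      have hslice : (U' *ᵥ y) = fun j => (U *ᵥ Y) (k, j) := by
        funext j
        simp [Matrix.mulVec, dotProduct, hU', hY, Fintype.sum_prod_type, mul_ite,
          Finset.sum_ite_eq']
      rw [hslice]
      calc nsq (fun j => (U *ᵥ Y) (k, j)) ≤ nsq (U *ᵥ Y) := nsq_slice_le k _
        _ ≤ nsq Y := hU Y
        _ = nsq y := nsq_lift k y
    rw [← hEq, htr]
    exact re_trace_mul_le U' σ hU'c
  · obtain ⟨U, hU, hEq⟩ := exists_contraction σ
    have hc : ∀ Y, nsq (emb k U *ᵥ Y) ≤ nsq Y := by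
      intro Y
      have hl : emb k U *ᵥ Y
          = fun p : K × N => if p.1 = k then (U *ᵥ fun j => Y (k, j)) p.2 else 0 := by
        funext p
        rcases eq_or_ne p.1 k with hp | hp
        · simp [Matrix.mulVec, dotProduct, emb, hp, Fintype.sum_prod_type, ite_and,
            Finset.sum_ite_eq']
        · simp [Matrix.mulVec, dotProduct, emb, hp]
      rw [hl, nsq_lift]
      exact (hU _).trans (nsq_slice_le k Y)
    rw [← hEq]
    have := re_trace_mul_le (emb k U) (emb k σ) hc
    rwa [emb_mul, emb_trace] at this

end Block

end TNaux

namespace TNaux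
variable {α β : Type*} [Fintype α] [Fintype β]

lemma ptraceLeft_smul (c : ℂ) (M : Matrix (α × β) (α × β) ℂ) :
    ptraceLeft (c • M) = c • ptraceLeft M := by
  ext b b'
  simp [ptraceLeft, Finset.mul_sum]

lemma ptraceLeft_sum {ι : Type*} (s : Finset ι) (f : ι → Matrix (α × β) (α × β) ℂ) :
    ptraceLeft (∑ j ∈ s, f j) = ∑ j ∈ s, ptraceLeft (f j) := by
  ext b b'
  simp [ptraceLeft, Matrix.sum_apply]
  exact Finset.sum_comm

end TNaux

lemma harith_lemma (n m : ℕ) :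
    (((2:ℕ) ^ m : ℕ) : ℝ) * ((2:ℝ) ^ (-(n:ℤ)) * ((n : ℝ) ^ 2 * Real.sqrt 2 ^ ((n : ℤ) - m)))
      = (n : ℝ) ^ 2 * Real.sqrt 2 ^ ((m : ℤ) - n) := by
  have hs0 : Real.sqrt 2 ≠ 0 := by positivity
  have key : ∀ z : ℤ, (2:ℝ) ^ z = Real.sqrt 2 ^ (2 * z) := by
    intro z
    rw [two_mul, zpow_add₀ hs0, ← mul_zpow, Real.mul_self_sqrt (by norm_num : (0:ℝ) ≤ 2)]
  have e : (((2:ℕ) ^ m : ℕ) : ℝ) = (2:ℝ) ^ (m : ℤ) := by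
    push_cast
    exact (zpow_natCast 2 m).symm
  rw [e, key (m:ℤ), key (-(n:ℤ))]
  calc Real.sqrt 2 ^ (2*(m:ℤ)) * (Real.sqrt 2 ^ (2*(-(n:ℤ))) * ((n:ℝ)^2 * Real.sqrt 2 ^ ((n:ℤ)-m)))
      = (n:ℝ)^2 * (Real.sqrt 2 ^ (2*(m:ℤ)) * Real.sqrt 2 ^ (2*(-(n:ℤ))) * Real.sqrt 2 ^ ((n:ℤ)-m)) := by
        ring
    _ = (n:ℝ)^2 * Real.sqrt 2 ^ (2*(m:ℤ) + 2*(-(n:ℤ)) + ((n:ℤ)-m)) := by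
        rw [← zpow_add₀ hs0, ← zpow_add₀ hs0]
    _ = (n:ℝ)^2 * Real.sqrt 2 ^ ((m:ℤ)-n) := by
        rw [show 2*(m:ℤ) + 2*(-(n:ℤ)) + ((n:ℤ)-m) = (m:ℤ)-n by ring]

lemma sum_neg_one_pow {n : ℕ} (r : Fin n → Fin 2) :
    (∑ a : Fin n → Fin 2, ((-1:ℂ)) ^ (∑ i, (a i : ℕ) * (r i : ℕ)))
      = if r = (fun _ => 0) then ((2:ℂ) ^ n) else 0 := by
  have h1 : ∀ a : Fin n → Fin 2, ((-1:ℂ)) ^ (∑ i, (a i : ℕ) * (r i : ℕ))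
      = ∏ i, ((-1:ℂ)) ^ ((a i : ℕ) * (r i : ℕ)) := by
    intro a
    rw [Finset.prod_pow_eq_pow_sum]
  simp only [h1]
  have h2 := Finset.prod_univ_sum (fun _ : Fin n => (Finset.univ : Finset (Fin 2)))
    (fun i b => ((-1:ℂ)) ^ ((b : ℕ) * (r i : ℕ)))
  rw [Fintype.piFinset_univ] at h2
  rw [← h2]
  have h3 : ∀ i : Fin n, (∑ b : Fin 2, ((-1:ℂ)) ^ ((b : ℕ) * (r i : ℕ)))
      = if r i = 0 then 2 else 0 := by
    intro i
    rw [Fin.sum_univ_two]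
    have h01 : r i = 0 ∨ r i = 1 := by omega
    rcases h01 with h | h <;> simp [h] <;> norm_num
  rw [Finset.prod_congr rfl fun i _ => h3 i]
  rcases eq_or_ne r (fun _ => 0) with h | h
  · subst h
    simp
  · rw [if_neg h]
    obtain ⟨i, hi⟩ := Function.ne_iff.mp h
    exact Finset.prod_eq_zero (Finset.mem_univ i) (by simp [hi])

lemma scalar_identity {n m : ℕ} (g : (Fin n → Fin 2) → (Fin m → Fin 2))
    (k : Fin m → Fin 2) (f : (Fin n → Fin 2) → ℂ) :
    (∑ a : Fin n → Fin 2, (if g a = k then (1:ℂ) else 0) *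
        (∑ r : Fin n → Fin 2, ((2:ℂ) ^ (-(n:ℤ)) * (-1) ^ (∑ i, (a i : ℕ) * (r i : ℕ))) * f r))
      - (2:ℂ) ^ (-(m:ℤ)) * f (fun _ => 0)
    = ∑ r : Fin n → Fin 2,
        ((2:ℂ) ^ (-(n:ℤ)) * ∑ a : Fin n → Fin 2,
          ((if g a = k then (1:ℂ) else 0) - (2:ℂ) ^ (-(m:ℤ))) *
            (-1) ^ (∑ i, (a i : ℕ) * (r i : ℕ))) * f r := by
  set c : ℂ := (2:ℂ) ^ (-(n:ℤ)) with hc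
  set t : ℂ := (2:ℂ) ^ (-(m:ℤ)) with ht
  set ε : (Fin n → Fin 2) → (Fin n → Fin 2) → ℂ :=
    fun a r => (-1) ^ (∑ i, (a i : ℕ) * (r i : ℕ)) with hε
  set δ : (Fin n → Fin 2) → ℂ := fun a => if g a = k then (1:ℂ) else 0 with hδ
  have e1 : (∑ a, δ a * (∑ r, (c * ε a r) * f r))
      = ∑ r, ∑ a, c * (δ a * (ε a r * f r)) := by
    simp only [Finset.mul_sum]
    rw [Finset.sum_comm]
    exact Finset.sum_congr rfl fun r _ => Finset.sum_congr rfl fun a _ => by ring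
  have e2 : (∑ r, (c * ∑ a, (δ a - t) * ε a r) * f r)
      = (∑ r, ∑ a, c * (δ a * (ε a r * f r))) - ∑ r, ∑ a, c * (t * (ε a r * f r)) := by
    rw [← Finset.sum_sub_distrib]
    refine Finset.sum_congr rfl fun r _ => ?_
    rw [← Finset.sum_sub_distrib, Finset.mul_sum, Finset.sum_mul]
    exact Finset.sum_congr rfl fun a _ => by ring
  have e3 : (∑ r, ∑ a, c * (t * (ε a r * f r))) = t * f (fun _ => 0) := by
    have per : ∀ r, (∑ a, c * (t * (ε a r * f r)))
        = if r = (fun _ => 0) then (c * t * f r) * (2:ℂ)^n else 0 := by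
      intro r
      have : (∑ a, c * (t * (ε a r * f r))) = (c * t * f r) * ∑ a, ε a r := by
        rw [Finset.mul_sum]
        exact Finset.sum_congr rfl fun a _ => by ring
      rw [this, hε]
      rw [sum_neg_one_pow r]
      split_ifs with h
      · rfl
      · exact mul_zero _
    rw [Finset.sum_congr rfl fun r _ => per r, Finset.sum_ite_eq' Finset.univ (fun _ => 0)
      (fun r => (c * t * f r) * (2:ℂ)^n)]
    simp only [Finset.mem_univ, if_pos]
    have : c * (2:ℂ)^n = 1 := by
      rw [hc, ← zpow_natCast (2:ℂ) n, ← zpow_add₀ (by norm_num : (2:ℂ) ≠ 0)]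
      simp
    calc c * t * f (fun _ => 0) * (2:ℂ)^n = (c * (2:ℂ)^n) * (t * f fun _ => 0) := by ring
      _ = t * f (fun _ => 0) := by rw [this, one_mul]
  rw [e1, e2, e3]

/-- Extractor error bound for an `m`-bit extractor function `g` with the balancedness
promise: `‖ρ_{KE} - u_K ⊗ ρ_E‖₁ ≤ n² √2^{m-n} Σ_r ‖tr_A (ρ_{AE} ∏ᵢ Cᵢ^{rᵢ})‖₁`. -/
theorem mbit_extractor_error_bound {n m dE : ℕ} {d : Fin n → ℕ}
    (g : (Fin n → Fin 2) → (Fin m → Fin 2))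
    (hg : ∀ (k : Fin m → Fin 2) (r : Fin n → Fin 2),
      |∑ a : Fin n → Fin 2,
          (((if g a = k then (1 : ℝ) else 0) - (2 : ℝ) ^ (-(m : ℤ))) *
            (-1 : ℝ) ^ (∑ i, (a i : ℕ) * (r i : ℕ)))| ≤
        (n : ℝ) ^ 2 * Real.sqrt 2 ^ ((n : ℤ) - m))
    (A : ∀ i, Fin 2 → Matrix (Fin (d i)) (Fin (d i)) ℂ)
    (hproj : ∀ i a, (A i a).IsHermitian ∧ A i a * A i a = A i a)
    (hsum : ∀ i, A i 0 + A i 1 = 1)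
    (ρAE : Matrix ((∀ i, Fin (d i)) × Fin dE) ((∀ i, Fin (d i)) × Fin dE) ℂ)
    (hρ : ρAE.PosSemidef) (htr : ρAE.trace = 1) :
    let C : ∀ i, Matrix (Fin (d i)) (Fin (d i)) ℂ := fun i => A i 0 - A i 1
    let MA : (Fin n → Fin 2) → Matrix (Fin dE) (Fin dE) ℂ := fun a =>
      ptraceLeft (ρAE * Matrix.of fun p q : (∀ i, Fin (d i)) × Fin dE =>
        (∏ i, A i (a i) (p.1 i) (q.1 i)) * (if p.2 = q.2 then 1 else 0))
    let ρKE : Matrix ((Fin m → Fin 2) × Fin dE) ((Fin m → Fin 2) × Fin dE) ℂ :=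
      Matrix.of fun p q => ∑ a : Fin n → Fin 2,
        (if p.1 = q.1 ∧ g a = p.1 then 1 else 0) * MA a p.2 q.2
    let ρE : Matrix (Fin dE) (Fin dE) ℂ := ptraceLeft ρAE
    let uKρE : Matrix ((Fin m → Fin 2) × Fin dE) ((Fin m → Fin 2) × Fin dE) ℂ :=
      Matrix.of fun p q => (if p.1 = q.1 then ((2 : ℂ) ^ (-(m : ℤ))) else 0) * ρE p.2 q.2
    traceNorm (ρKE - uKρE) ≤
      (n : ℝ) ^ 2 * Real.sqrt 2 ^ ((m : ℤ) - n) *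
        ∑ r : Fin n → Fin 2,
          traceNorm (ptraceLeft (ρAE * Matrix.of fun p q : (∀ i, Fin (d i)) × Fin dE =>
            (∏ i, (if r i = 0 then (1 : Matrix (Fin (d i)) (Fin (d i)) ℂ) else C i)
                (p.1 i) (q.1 i)) * (if p.2 = q.2 then 1 else 0))) := by
  intro C MA ρKE ρE uKρE
  classical
  set σ : (Fin n → Fin 2) → Matrix (Fin dE) (Fin dE) ℂ := fun r =>
    ptraceLeft (ρAE * Matrix.of fun p q : (∀ i, Fin (d i)) × Fin dE =>
      (∏ i, (if r i = 0 then (1 : Matrix (Fin (d i)) (Fin (d i)) ℂ) else C i)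
          (p.1 i) (q.1 i)) * (if p.2 = q.2 then 1 else 0)) with hσdef
  set coeff : (Fin m → Fin 2) → (Fin n → Fin 2) → ℝ := fun k r =>
    (2:ℝ) ^ (-(n:ℤ)) * ∑ a : Fin n → Fin 2,
      (((if g a = k then (1 : ℝ) else 0) - (2 : ℝ) ^ (-(m : ℤ))) *
        (-1 : ℝ) ^ (∑ i, (a i : ℕ) * (r i : ℕ))) with hcoeff
  have hC : ∀ i, C i = A i 0 - A i 1 := fun i => rfl
  have hA2 : ∀ (i : Fin n) (b : Fin 2), A i b
      = (2⁻¹:ℂ) • ((1 : Matrix (Fin (d i)) (Fin (d i)) ℂ) + ((-1:ℂ)^(b:ℕ)) • C i) := by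
    intro i b
    rcases (show b = 0 ∨ b = 1 from by omega) with rfl | rfl
    · rw [hC, ← hsum i]
      simp only [Fin.val_zero, pow_zero, one_smul]
      module
    · rw [hC, ← hsum i]
      simp only [Fin.val_one, pow_one]
      module
  have hprod : ∀ (a : Fin n → Fin 2) (p q : ∀ i, Fin (d i)),
      (∏ i, A i (a i) (p i) (q i))
        = ∑ r : Fin n → Fin 2, ((2:ℂ)^(-(n:ℤ)) * (-1)^(∑ i, (a i : ℕ)*(r i : ℕ)))
            * ∏ i, (if r i = 0 then (1 : Matrix (Fin (d i)) (Fin (d i)) ℂ) else C i)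
                (p i) (q i) := by
    intro a p q
    have step1 : ∀ i : Fin n, A i (a i) (p i) (q i)
        = (2⁻¹:ℂ) * ∑ b : Fin 2, ((-1:ℂ)^((a i : ℕ)*(b : ℕ)))
            * (if b = 0 then (1 : Matrix (Fin (d i)) (Fin (d i)) ℂ) else C i) (p i) (q i) := by
      intro i
      rw [hA2 i (a i), Fin.sum_univ_two]
      simp only [Matrix.smul_apply, Matrix.add_apply, smul_eq_mul, Fin.val_zero, Fin.val_one,
        mul_zero, pow_zero, mul_one, if_pos rfl, if_true, eq_self_iff_true]
      rw [if_neg (by decide : (1 : Fin 2) ≠ 0)]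
      ring
    rw [Finset.prod_congr rfl fun i _ => step1 i, Finset.prod_mul_distrib, Finset.prod_const]
    have h2 := Finset.prod_univ_sum (fun _ : Fin n => (Finset.univ : Finset (Fin 2)))
      (fun i b => ((-1:ℂ)^((a i : ℕ)*(b : ℕ)))
        * (if b = 0 then (1 : Matrix (Fin (d i)) (Fin (d i)) ℂ) else C i) (p i) (q i))
    rw [Fintype.piFinset_univ] at h2
    rw [h2, Finset.mul_sum]
    refine Finset.sum_congr rfl fun r _ => ?_
    rw [Finset.prod_mul_distrib]
    have h3 : (∏ i, ((-1:ℂ)^((a i : ℕ)*(r i : ℕ)))) = (-1:ℂ)^(∑ i, (a i : ℕ)*(r i : ℕ)) := by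
      rw [Finset.prod_pow_eq_pow_sum]
    rw [h3]
    have hpow : ((2:ℂ)⁻¹)^n = (2:ℂ)^(-(n:ℤ)) := by
      rw [inv_pow, ← zpow_natCast (2:ℂ) n, ← _root_.zpow_neg]
    rw [Finset.card_univ, Fintype.card_fin, hpow]
    ring
  have hNa : ∀ a : Fin n → Fin 2, (Matrix.of fun p q : (∀ i, Fin (d i)) × Fin dE =>
      (∏ i, A i (a i) (p.1 i) (q.1 i)) * (if p.2 = q.2 then 1 else 0))
      = ∑ r : Fin n → Fin 2, ((2:ℂ)^(-(n:ℤ)) * (-1)^(∑ i, (a i : ℕ)*(r i : ℕ)))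
          • Matrix.of (fun p q : (∀ i, Fin (d i)) × Fin dE =>
            (∏ i, (if r i = 0 then (1 : Matrix (Fin (d i)) (Fin (d i)) ℂ) else C i)
                (p.1 i) (q.1 i)) * (if p.2 = q.2 then 1 else 0)) := by
    intro a
    ext p q
    simp only [Matrix.of_apply, Matrix.sum_apply, Matrix.smul_apply, smul_eq_mul]
    rw [hprod a p.1 q.1, Finset.sum_mul]
    exact Finset.sum_congr rfl fun r _ => by ring
  have hMA : ∀ a : Fin n → Fin 2,
      MA a = ∑ r : Fin n → Fin 2,
        ((2:ℂ)^(-(n:ℤ)) * (-1)^(∑ i, (a i : ℕ)*(r i : ℕ))) • σ r := by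
    intro a
    show ptraceLeft _ = _
    rw [hNa a, Matrix.mul_sum, TNaux.ptraceLeft_sum]
    refine Finset.sum_congr rfl fun r _ => ?_
    rw [Matrix.mul_smul, TNaux.ptraceLeft_smul]
  have hone : (Matrix.of fun p q : (∀ i, Fin (d i)) × Fin dE =>
      (∏ i, (if (0 : Fin 2) = 0 then (1 : Matrix (Fin (d i)) (Fin (d i)) ℂ) else C i)
          (p.1 i) (q.1 i)) * (if p.2 = q.2 then 1 else 0)) = 1 := by
    ext p q
    simp only [Matrix.of_apply, eq_self_iff_true, if_true]
    rw [show (∏ i, (1 : Matrix (Fin (d i)) (Fin (d i)) ℂ) (p.1 i) (q.1 i))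
        = ∏ i, (if p.1 i = q.1 i then (1:ℂ) else 0) from
      Finset.prod_congr rfl fun i _ => by rw [Matrix.one_apply]]
    rw [Finset.prod_boole]
    rw [Matrix.one_apply]
    rcases eq_or_ne p q with h | h
    · subst h
      simp
    · rw [if_neg h]
      rcases eq_or_ne p.2 q.2 with h2 | h2
      · have h1 : ¬ (∀ i ∈ Finset.univ, p.1 i = q.1 i) := by
          intro hall
          exact h (Prod.ext (funext fun i => hall i (Finset.mem_univ i)) h2)
        rw [if_neg h1, zero_mul]
      · rw [if_neg h2, mul_zero]
  have hρEσ : ρE = σ (fun _ => 0) := by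
    show ptraceLeft ρAE = ptraceLeft (ρAE * Matrix.of fun p q : (∀ i, Fin (d i)) × Fin dE =>
      (∏ i, (if (0 : Fin 2) = 0 then (1 : Matrix (Fin (d i)) (Fin (d i)) ℂ) else C i)
          (p.1 i) (q.1 i)) * (if p.2 = q.2 then 1 else 0))
    rw [hone, Matrix.mul_one]
  have hdecomp : ρKE - uKρE
      = ∑ kr : (Fin m → Fin 2) × (Fin n → Fin 2),
          ((coeff kr.1 kr.2 : ℝ) : ℂ) • TNaux.emb kr.1 (σ kr.2) := by
    ext pp qq
    obtain ⟨k1, e⟩ := pp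
    obtain ⟨k2, e'⟩ := qq
    rw [Matrix.sub_apply]
    have hKE : ρKE (k1,e) (k2,e')
        = ∑ a : Fin n → Fin 2, (if k1 = k2 ∧ g a = k1 then (1:ℂ) else 0) * MA a e e' := rfl
    have hU : uKρE (k1,e) (k2,e')
        = (if k1 = k2 then ((2:ℂ)^(-(m:ℤ))) else 0) * ρE e e' := rfl
    rw [hKE, hU, Matrix.sum_apply]
    simp only [Matrix.smul_apply, TNaux.emb, Matrix.of_apply, smul_eq_mul]
    rcases eq_or_ne k1 k2 with rfl | hk
    · -- diagonal block
      simp only [if_pos rfl, true_and]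
      rw [Fintype.sum_prod_type]
      have hcollapse : ∀ k : Fin m → Fin 2,
          (∑ r : Fin n → Fin 2, ((coeff k r : ℝ) : ℂ)
            * ((if k1 = k ∧ k1 = k then (1:ℂ) else 0) * σ r e e'))
          = if k1 = k then ∑ r : Fin n → Fin 2, ((coeff k r : ℝ) : ℂ) * σ r e e' else 0 := by
        intro k
        rcases eq_or_ne k1 k with h | h
        · rw [if_pos h]
          refine Finset.sum_congr rfl fun r _ => ?_
          rw [if_pos ⟨h, h⟩, one_mul]
        · rw [if_neg h]
          refine Finset.sum_eq_zero fun r _ => ?_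
          rw [if_neg (fun hh => h hh.1), zero_mul, mul_zero]
      rw [Finset.sum_congr rfl fun k _ => hcollapse k, Finset.sum_ite_eq Finset.univ k1
        (fun k => ∑ r : Fin n → Fin 2, ((coeff k r : ℝ) : ℂ) * σ r e e')]
      rw [if_pos (Finset.mem_univ k1)]
      have hMAe : ∀ a : Fin n → Fin 2, MA a e e'
          = ∑ r : Fin n → Fin 2,
              ((2:ℂ)^(-(n:ℤ)) * (-1)^(∑ i, (a i : ℕ)*(r i : ℕ))) * σ r e e' := by
        intro a
        rw [hMA a, Matrix.sum_apply]
        exact Finset.sum_congr rfl fun r _ => by rw [Matrix.smul_apply, smul_eq_mul]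
      have hcast : ∀ r : Fin n → Fin 2, ((coeff k1 r : ℝ) : ℂ)
          = (2:ℂ)^(-(n:ℤ)) * ∑ a : Fin n → Fin 2,
              ((if g a = k1 then (1:ℂ) else 0) - (2:ℂ)^(-(m:ℤ)))
                * (-1)^(∑ i, (a i : ℕ)*(r i : ℕ)) := by
        intro r
        rw [hcoeff]
        push_cast [apply_ite Complex.ofReal]
        norm_num
      simp only [hMAe, hcast, hρEσ]
      exact scalar_identity g k1 (fun r => σ r e e')
    · -- off-diagonal block
      rw [if_neg hk]
      rw [Finset.sum_eq_zero fun a _ => by rw [if_neg (fun h => hk h.1), zero_mul]]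
      rw [Finset.sum_eq_zero fun kr _ => by
        rw [if_neg (fun h : k1 = kr.1 ∧ k2 = kr.1 => hk (h.1.trans h.2.symm)),
          zero_mul, mul_zero]]
      ring
  rw [hdecomp]
  refine le_trans (TNaux.traceNorm_sum_smul_le Finset.univ _ _) ?_
  have hb : ∀ kr : (Fin m → Fin 2) × (Fin n → Fin 2),
      |coeff kr.1 kr.2| * traceNorm (TNaux.emb kr.1 (σ kr.2))
        ≤ ((2:ℝ) ^ (-(n:ℤ)) * ((n : ℝ) ^ 2 * Real.sqrt 2 ^ ((n : ℤ) - m))) *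
            traceNorm (σ kr.2) := by
    intro kr
    rw [TNaux.traceNorm_emb]
    refine mul_le_mul_of_nonneg_right ?_ (TNaux.traceNorm_nonneg _)
    rw [hcoeff, abs_mul, abs_of_pos (by positivity : (0:ℝ) < (2:ℝ) ^ (-(n:ℤ)))]
    exact mul_le_mul_of_nonneg_left (hg kr.1 kr.2) (by positivity)
  refine le_trans (Finset.sum_le_sum fun kr _ => hb kr) ?_
  rw [Fintype.sum_prod_type]
  simp only [← Finset.mul_sum]
  rw [Finset.sum_const, Finset.card_univ]
  have hcard : Fintype.card (Fin m → Fin 2) = 2 ^ m := by simp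
  rw [hcard, nsmul_eq_mul]
  have h5 : (2:ℝ) ^ (-(n:ℤ)) * ((n:ℝ) ^ 2 * Real.sqrt 2 ^ ((n:ℤ) - m)) * (((2:ℕ) ^ m : ℕ) : ℝ)
      = (n:ℝ) ^ 2 * Real.sqrt 2 ^ ((m:ℤ) - n) := by
    rw [← harith_lemma n m]; ring
  rw [← mul_assoc, h5]
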